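/- Truncation estimate via hypercontractivity: for every f : {-1,1}ⁿ → ℝ and d ≥ 0, ‖f^{≤d}‖₂² ≤ 3^{d/2} ‖f‖₂ ‖f‖_{4/3}, where f^{≤d} = ∑_{|S|≤d} f̂(S) χ_S. -/

import Mathlib

open Finset Function

noncomputable section

/-- Expectation with respect to the uniform measure on the Hamming cube,
encoded as `Fin n → Bool` (`true ↦ 1`, `false ↦ -1`). -/
def expec {n : ℕ} (f : (Fin n → Bool) → ℝ) : ℝ :=
  (∑ x : Fin n → Bool, f x) / 2 ^ n

/-- The character χ_S. -/
def chi {n : ℕ} (S : Finset (Fin n)) (x : Fin n → Bool) : ℝ :=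
  ∏ i ∈ S, (if x i then (1 : ℝ) else -1)

/-- Fourier coefficient f̂(S) = E[f χ_S]. -/
def fcoef {n : ℕ} (f : (Fin n → Bool) → ℝ) (S : Finset (Fin n)) : ℝ :=
  expec (fun x => f x * chi S x)

/-- Influence of coordinate i: probability that flipping coordinate i changes f. -/
def infl {n : ℕ} (f : (Fin n → Bool) → ℝ) (i : Fin n) : ℝ :=
  expec (fun x => if f x ≠ f (Function.update x i (!(x i))) then (1 : ℝ) else 0)

/-- Total influence. -/
def totalInfl {n : ℕ} (f : (Fin n → Bool) → ℝ) : ℝ :=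
  ∑ i : Fin n, infl f i

/-- The p-norm ‖f‖_p = (E[|f|^p])^{1/p}. -/
def pnorm {n : ℕ} (p : ℝ) (f : (Fin n → Bool) → ℝ) : ℝ :=
  (expec (fun x => |f x| ^ p)) ^ (1 / p)

/-- The discrete i-th derivative. -/
def deriv' {n : ℕ} (i : Fin n) (g : (Fin n → Bool) → ℝ) : (Fin n → Bool) → ℝ :=
  fun x => (g (Function.update x i true) - g (Function.update x i false)) / 2

/-- The noise operator T_ρ. -/
def noiseOp {n : ℕ} (ρ : ℝ) (f : (Fin n → Bool) → ℝ) : (Fin n → Bool) → ℝ :=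
  fun x => ∑ S : Finset (Fin n), ρ ^ S.card * fcoef f S * chi S x

end

/- ============ Auxiliary development ============ -/

noncomputable section Aux

namespace TruncAux

variable {n : ℕ}

/-- multilinear polynomial with coefficients `γ`. -/
def Pg (γ : Finset (Fin n) → ℝ) : (Fin n → Bool) → ℝ :=
  fun x => ∑ S : Finset (Fin n), γ S * chi S x

lemma two_pow_pos : (0:ℝ) < (2:ℝ) ^ n := by positivity

lemma expec_nonneg {F : (Fin n → Bool) → ℝ} (h : ∀ x, 0 ≤ F x) : 0 ≤ expec F := by
  unfold expec
  apply div_nonneg (Finset.sum_nonneg fun x _ => h x) (by positivity)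

lemma expec_const (c : ℝ) : expec (fun _ : Fin n → Bool => c) = c := by
  unfold expec
  rw [Finset.sum_const]
  simp [Finset.card_univ]

lemma chi_empty (x : Fin n → Bool) : chi ∅ x = 1 := by simp [chi]

lemma sum_chi_mul_chi (S T : Finset (Fin n)) :
    ∑ x : Fin n → Bool, chi S x * chi T x = if S = T then (2:ℝ) ^ n else 0 := by
  set g : Fin n → Bool → ℝ := fun i b => (if i ∈ S then (if b then (1:ℝ) else -1) else 1) *
      (if i ∈ T then (if b then (1:ℝ) else -1) else 1) with hg
  have key : ∀ x : Fin n → Bool, chi S x * chi T x = ∏ i : Fin n, g i (x i) := by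
    intro x
    rw [hg]
    rw [Finset.prod_mul_distrib]
    congr 1
    · rw [Finset.prod_ite_mem Finset.univ S fun i => (if x i then (1:ℝ) else -1),
        Finset.univ_inter]
      rfl
    · rw [Finset.prod_ite_mem Finset.univ T fun i => (if x i then (1:ℝ) else -1),
        Finset.univ_inter]
      rfl
  simp_rw [key]
  have hps := Finset.prod_univ_sum (fun _ : Fin n => (Finset.univ : Finset Bool)) g
  rw [Fintype.piFinset_univ] at hps
  rw [← hps]
  by_cases h : S = T
  · subst h
    rw [if_pos rfl]
    have : ∀ i : Fin n, (∑ b : Bool, g i b) = 2 := by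
      intro i
      by_cases hi : i ∈ S <;> simp [hg, hi] <;> norm_num
    simp_rw [this]
    simp
  · rw [if_neg h]
    obtain ⟨i, hi⟩ : ∃ i, ¬ (i ∈ S ↔ i ∈ T) := by
      by_contra hc
      push_neg at hc
      exact h (Finset.ext fun i => (hc i))
    apply Finset.prod_eq_zero (Finset.mem_univ i)
    rcases Decidable.em (i ∈ S) with hS | hS <;> rcases Decidable.em (i ∈ T) with hT | hT <;>
      simp [hg, hS, hT] at hi ⊢

lemma expec_Pg_mul (γ : Finset (Fin n) → ℝ) (f : (Fin n → Bool) → ℝ) :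
    expec (fun x => Pg γ x * f x) = ∑ S : Finset (Fin n), γ S * fcoef f S := by
  unfold expec Pg fcoef expec
  simp only [Finset.sum_mul, mul_assoc]
  rw [Finset.sum_comm, Finset.sum_div]
  apply Finset.sum_congr rfl
  intro S _
  rw [← Finset.mul_sum, mul_div_assoc]
  congr 2
  apply Finset.sum_congr rfl
  intro x _
  ring

lemma fcoef_Pg (δ : Finset (Fin n) → ℝ) (S : Finset (Fin n)) :
    fcoef (Pg δ) S = δ S := by
  unfold fcoef expec Pg
  simp only [Finset.sum_mul, mul_assoc]
  rw [Finset.sum_comm, Finset.sum_div]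
  have : ∀ T : Finset (Fin n), (∑ x : Fin n → Bool, δ T * (chi T x * chi S x)) / 2 ^ n
      = δ T * (if T = S then (1:ℝ) else 0) := by
    intro T
    rw [← Finset.mul_sum, sum_chi_mul_chi, mul_div_assoc]
    by_cases h : T = S <;> simp [h]
  simp_rw [this]
  simp

lemma expec_Pg_mul_Pg (γ δ : Finset (Fin n) → ℝ) :
    expec (fun x => Pg γ x * Pg δ x) = ∑ S : Finset (Fin n), γ S * δ S := by
  rw [expec_Pg_mul]
  simp_rw [fcoef_Pg]


lemma expec_add (F G : (Fin n → Bool) → ℝ) :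
    expec (fun x => F x + G x) = expec F + expec G := by
  unfold expec
  rw [Finset.sum_add_distrib, add_div]

lemma expec_const_mul (c : ℝ) (F : (Fin n → Bool) → ℝ) :
    expec (fun x => c * F x) = c * expec F := by
  unfold expec
  rw [← Finset.mul_sum, mul_div_assoc]

lemma expec_mul_le (u v : (Fin n → Bool) → ℝ) :
    expec (fun x => u x * v x) ≤
      Real.sqrt (expec fun x => u x ^ 2) * Real.sqrt (expec fun x => v x ^ 2) := by
  have hN : (0:ℝ) < 2 ^ n := two_pow_pos
  have hSu : (0:ℝ) ≤ ∑ x : Fin n → Bool, u x ^ 2 :=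
    Finset.sum_nonneg fun x _ => sq_nonneg _
  have hSv : (0:ℝ) ≤ ∑ x : Fin n → Bool, v x ^ 2 :=
    Finset.sum_nonneg fun x _ => sq_nonneg _
  unfold expec
  rw [Real.sqrt_div hSu, Real.sqrt_div hSv, div_mul_div_comm,
    Real.mul_self_sqrt hN.le]
  gcongr
  calc ∑ x : Fin n → Bool, u x * v x ≤ |∑ x : Fin n → Bool, u x * v x| := le_abs_self _
    _ = Real.sqrt ((∑ x : Fin n → Bool, u x * v x)^2) := (Real.sqrt_sq_eq_abs _).symm
    _ ≤ Real.sqrt ((∑ x : Fin n → Bool, u x^2) * ∑ x : Fin n → Bool, v x^2) :=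
        Real.sqrt_le_sqrt (Finset.sum_mul_sq_le_sq_mul_sq _ _ _)
    _ = _ := Real.sqrt_mul hSu _

lemma chi_single (i : Fin n) (x : Fin n → Bool) :
    chi {i} x = if x i then (1:ℝ) else -1 := by simp [chi]

lemma chi_single_sq (i : Fin n) (x : Fin n → Bool) : chi {i} x ^ 2 = 1 := by
  rw [chi_single]
  by_cases h : x i <;> simp [h]

lemma chi_update_of_not_mem {i : Fin n} {S : Finset (Fin n)} (h : i ∉ S)
    (x : Fin n → Bool) (b : Bool) : chi S (Function.update x i b) = chi S x := by
  unfold chi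
  apply Finset.prod_congr rfl
  intro j hj
  have hne : j ≠ i := fun hji => h (by rw [← hji]; exact hj)
  rw [Function.update_of_ne hne b x]

lemma chi_insert {i : Fin n} {T : Finset (Fin n)} (h : i ∉ T) (x : Fin n → Bool) :
    chi (insert i T) x = chi {i} x * chi T x := by
  rw [chi_single]
  exact Finset.prod_insert h

lemma Pg_update (γ : Finset (Fin n) → ℝ) (i : Fin n)
    (hγ : ∀ T, i ∈ T → γ T = 0) (x : Fin n → Bool) (b : Bool) :
    Pg γ (Function.update x i b) = Pg γ x := by
  unfold Pg
  apply Finset.sum_congr rfl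
  intro T _
  by_cases h : i ∈ T
  · simp [hγ T h]
  · rw [chi_update_of_not_mem h]

lemma sum_chi_single_mul (i : Fin n) (G : (Fin n → Bool) → ℝ)
    (hG : ∀ x b, G (Function.update x i b) = G x) :
    ∑ x : Fin n → Bool, chi {i} x * G x = 0 := by
  apply Finset.sum_ninvolution (fun x => Function.update x i (!(x i)))
  · intro x
    have h1 : G (Function.update x i (!(x i))) = G x := hG x _
    have h2 : chi {i} (Function.update x i (!(x i))) = - chi {i} x := by
      rw [chi_single, chi_single, Function.update_self]
      by_cases h : x i <;> simp [h]
    rw [h1, h2]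
    ring
  · intro x _
    intro hc
    have := congrFun hc i
    rw [Function.update_self] at this
    exact (x i).not_ne_self this
  · intro x; exact Finset.mem_univ _
  · intro x
    funext j
    by_cases h : j = i
    · subst h
      simp
    · simp [Function.update_of_ne h]

lemma sum_mem_reindex (i : Fin n) (F : Finset (Fin n) → ℝ) :
    ∑ S ∈ Finset.univ.filter (fun S : Finset (Fin n) => i ∈ S), F S
      = ∑ T ∈ Finset.univ.filter (fun T : Finset (Fin n) => i ∉ T), F (insert i T) := by
  apply Finset.sum_nbij' (fun S => S.erase i) (fun T => insert i T)
  · intro S hS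
    simp only [Finset.mem_filter, Finset.mem_univ, true_and] at hS ⊢
    exact Finset.notMem_erase i S
  · intro T hT
    simp only [Finset.mem_filter, Finset.mem_univ, true_and] at hT ⊢
    exact Finset.mem_insert_self i T
  · intro S hS
    simp only [Finset.mem_filter, Finset.mem_univ, true_and] at hS
    exact Finset.insert_erase hS
  · intro T hT
    simp only [Finset.mem_filter, Finset.mem_univ, true_and] at hT
    exact Finset.erase_insert hT
  · intro S hS
    simp only [Finset.mem_filter, Finset.mem_univ, true_and] at hS
    rw [Finset.insert_erase hS]

lemma sum_split (i : Fin n) (F : Finset (Fin n) → ℝ) :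
    ∑ S : Finset (Fin n), F S =
      (∑ T ∈ Finset.univ.filter (fun T : Finset (Fin n) => i ∉ T), F (insert i T))
      + ∑ T ∈ Finset.univ.filter (fun T : Finset (Fin n) => i ∉ T), F T := by
  rw [← sum_mem_reindex]
  exact (Finset.sum_filter_add_sum_filter_not Finset.univ (fun S => i ∈ S) F).symm


lemma bonami (J : Finset (Fin n)) :
    ∀ (d : ℕ) (γ : Finset (Fin n) → ℝ),
      (∀ S, γ S ≠ 0 → S.card ≤ d ∧ S ⊆ J) →
      expec (fun x => (Pg γ x) ^ 4) ≤ 9 ^ d * (∑ S : Finset (Fin n), γ S ^ 2) ^ 2 := by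
  classical
  induction J using Finset.induction_on with
  | empty =>
    intro d γ hs
    have hγ : ∀ S : Finset (Fin n), S ≠ ∅ → γ S = 0 := by
      intro S hS
      by_contra h
      exact hS (Finset.subset_empty.mp (hs S h).2)
    have hP : ∀ x, Pg γ x = γ ∅ := by
      intro x
      unfold Pg
      rw [Finset.sum_eq_single ∅]
      · simp [chi_empty]
      · intro S _ hS; simp [hγ S hS]
      · simp
    simp_rw [hP]
    rw [expec_const]
    have h2 : ∑ S : Finset (Fin n), γ S ^ 2 = γ ∅ ^ 2 := by
      rw [Finset.sum_eq_single ∅]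
      · intro S _ hS; simp [hγ S hS]
      · simp
    rw [h2]
    have h9 : (1:ℝ) ≤ 9 ^ d := one_le_pow₀ (by norm_num)
    nlinarith [sq_nonneg (γ ∅ ^ 2), sq_nonneg (γ ∅)]
  | @insert i J' hiJ IH =>
    intro d γ hs
    set γ₁ : Finset (Fin n) → ℝ := fun T => if i ∈ T then 0 else γ (insert i T) with hγ₁
    set γ₂ : Finset (Fin n) → ℝ := fun T => if i ∈ T then 0 else γ T with hγ₂
    have f1a : ∀ T, i ∈ T → γ₁ T = 0 := fun T hT => if_pos hT
    have f1b : ∀ T, i ∈ T → γ₂ T = 0 := fun T hT => if_pos hT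
    have f2 : ∀ S, γ₁ S ≠ 0 → S.card ≤ d - 1 ∧ S ⊆ J' := by
      intro S h
      by_cases hiS : i ∈ S
      · exact absurd (f1a S hiS) h
      · rw [hγ₁] at h
        simp only [hiS, if_false] at h
        obtain ⟨hc, hsub⟩ := hs _ h
        rw [Finset.card_insert_of_notMem hiS] at hc
        constructor
        · omega
        · intro j hj
          have hji : j ≠ i := fun he => hiS (he ▸ hj)
          have := hsub (Finset.mem_insert_of_mem hj)
          rcases Finset.mem_insert.mp this with he | hm
          · exact absurd he hji
          · exact hm
    have f2' : d = 0 → ∀ S, γ₁ S = 0 := by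
      intro hd S
      by_contra h
      by_cases hiS : i ∈ S
      · exact h (f1a S hiS)
      · rw [hγ₁] at h
        simp only [hiS, if_false] at h
        have hc := (hs _ h).1
        rw [Finset.card_insert_of_notMem hiS, hd] at hc
        omega
    have f3 : ∀ S, γ₂ S ≠ 0 → S.card ≤ d ∧ S ⊆ J' := by
      intro S h
      by_cases hiS : i ∈ S
      · exact absurd (f1b S hiS) h
      · rw [hγ₂] at h
        simp only [hiS, if_false] at h
        obtain ⟨hc, hsub⟩ := hs _ h
        refine ⟨hc, fun j hj => ?_⟩
        have hji : j ≠ i := fun he => hiS (he ▸ hj)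
        rcases Finset.mem_insert.mp (hsub hj) with he | hm
        · exact absurd he hji
        · exact hm
    -- decomposition
    have e1 : ∀ x, (∑ T : Finset (Fin n), γ₁ T * chi T x)
        = ∑ T ∈ Finset.univ.filter (fun T : Finset (Fin n) => i ∉ T),
            γ (insert i T) * chi T x := by
      intro x
      rw [Finset.sum_filter]
      apply Finset.sum_congr rfl
      intro T _
      by_cases h : i ∈ T <;> simp [hγ₁, h]
    have e2 : ∀ x, (∑ T : Finset (Fin n), γ₂ T * chi T x)
        = ∑ T ∈ Finset.univ.filter (fun T : Finset (Fin n) => i ∉ T), γ T * chi T x := by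
      intro x
      rw [Finset.sum_filter]
      apply Finset.sum_congr rfl
      intro T _
      by_cases h : i ∈ T <;> simp [hγ₂, h]
    have f4 : ∀ x, Pg γ x = chi {i} x * Pg γ₁ x + Pg γ₂ x := by
      intro x
      unfold Pg
      rw [sum_split i (fun S => γ S * chi S x), e1, e2, Finset.mul_sum]
      congr 1
      apply Finset.sum_congr rfl
      intro T hT
      have hiT : i ∉ T := (Finset.mem_filter.mp hT).2
      rw [chi_insert hiT]
      ring
    have f5 : ∑ S : Finset (Fin n), γ S ^ 2
        = (∑ T : Finset (Fin n), γ₁ T ^ 2) + ∑ T : Finset (Fin n), γ₂ T ^ 2 := by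
      rw [sum_split i (fun S => γ S ^ 2)]
      congr 1
      · rw [Finset.sum_filter]
        apply Finset.sum_congr rfl
        intro T _
        by_cases h : i ∈ T <;> simp [hγ₁, h]
      · rw [Finset.sum_filter]
        apply Finset.sum_congr rfl
        intro T _
        by_cases h : i ∈ T <;> simp [hγ₂, h]
    set A := ∑ T : Finset (Fin n), γ₁ T ^ 2 with hA
    set B := ∑ T : Finset (Fin n), γ₂ T ^ 2 with hB
    have hA0 : 0 ≤ A := Finset.sum_nonneg fun T _ => sq_nonneg _
    have hB0 : 0 ≤ B := Finset.sum_nonneg fun T _ => sq_nonneg _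
    have f6a : ∀ x b, Pg γ₁ (Function.update x i b) = Pg γ₁ x :=
      fun x b => Pg_update γ₁ i f1a x b
    have f6b : ∀ x b, Pg γ₂ (Function.update x i b) = Pg γ₂ x :=
      fun x b => Pg_update γ₂ i f1b x b
    -- expansion
    have f7 : ∀ x, (Pg γ x) ^ 4 =
        ((Pg γ₁ x)^4 + (6 * ((Pg γ₁ x)^2 * (Pg γ₂ x)^2) + (Pg γ₂ x)^4))
        + chi {i} x * (4 * (Pg γ₁ x)^3 * (Pg γ₂ x) + 4 * (Pg γ₁ x) * (Pg γ₂ x)^3) := by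
      intro x
      rw [f4 x]
      have hc : chi {i} x ^ 2 = 1 := chi_single_sq i x
      linear_combination ((chi {i} x ^ 2 + 1) * (Pg γ₁ x)^4
        + 4 * chi {i} x * (Pg γ₁ x)^3 * (Pg γ₂ x)
        + 6 * (Pg γ₁ x)^2 * (Pg γ₂ x)^2) * hc
    have f8 : expec (fun x => (Pg γ x) ^ 4)
        = expec (fun x => (Pg γ₁ x)^4)
          + (6 * expec (fun x => (Pg γ₁ x)^2 * (Pg γ₂ x)^2)
          + expec (fun x => (Pg γ₂ x)^4)) := by
      have hzero : expec (fun x => chi {i} x *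
          (4 * (Pg γ₁ x)^3 * (Pg γ₂ x) + 4 * (Pg γ₁ x) * (Pg γ₂ x)^3)) = 0 := by
        unfold expec
        rw [sum_chi_single_mul i _ (fun x b => by rw [f6a, f6b]), zero_div]
      calc expec (fun x => (Pg γ x) ^ 4)
          = expec (fun x => ((Pg γ₁ x)^4 + (6 * ((Pg γ₁ x)^2 * (Pg γ₂ x)^2) + (Pg γ₂ x)^4))
            + chi {i} x * (4 * (Pg γ₁ x)^3 * (Pg γ₂ x) + 4 * (Pg γ₁ x) * (Pg γ₂ x)^3)) := by
            apply congrArg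
            funext x
            exact f7 x
        _ = expec (fun x => ((Pg γ₁ x)^4 + (6 * ((Pg γ₁ x)^2 * (Pg γ₂ x)^2) + (Pg γ₂ x)^4))) := by
            rw [expec_add, hzero, add_zero]
        _ = _ := by
            rw [expec_add, expec_add, expec_const_mul]
    -- IH applications
    have f9a : expec (fun x => (Pg γ₁ x)^4) ≤ 9 ^ (d-1) * A ^ 2 := IH (d-1) γ₁ f2
    have f9b : expec (fun x => (Pg γ₂ x)^4) ≤ 9 ^ d * B ^ 2 := IH d γ₂ f3
    -- Cauchy-Schwarz for the middle term
    have f10 : expec (fun x => (Pg γ₁ x)^2 * (Pg γ₂ x)^2)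
        ≤ Real.sqrt (expec (fun x => (Pg γ₁ x)^4)) * Real.sqrt (expec (fun x => (Pg γ₂ x)^4)) := by
      have := expec_mul_le (fun x => (Pg γ₁ x)^2) (fun x => (Pg γ₂ x)^2)
      simp only [← pow_mul] at this
      norm_num at this
      exact this
    have h93 : ∀ m : ℕ, (9:ℝ) ^ m = 3 ^ m * 3 ^ m := by
      intro m
      rw [← mul_pow]
      norm_num
    have h93sq : ∀ m : ℕ, ((3:ℝ) ^ m) ^ 2 = 9 ^ m := by
      intro m
      rw [h93]
      ring
    have s1 : Real.sqrt (expec (fun x => (Pg γ₁ x)^4)) ≤ 3 ^ (d-1) * A := by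
      calc Real.sqrt (expec (fun x => (Pg γ₁ x)^4))
          ≤ Real.sqrt (9 ^ (d-1) * A ^ 2) := Real.sqrt_le_sqrt f9a
        _ = 3 ^ (d-1) * A := by
            rw [show (9:ℝ) ^ (d-1) * A ^ 2 = (3 ^ (d-1) * A)^2 by rw [mul_pow, h93sq]]
            exact Real.sqrt_sq (by positivity)
    have s2 : Real.sqrt (expec (fun x => (Pg γ₂ x)^4)) ≤ 3 ^ d * B := by
      calc Real.sqrt (expec (fun x => (Pg γ₂ x)^4))
          ≤ Real.sqrt (9 ^ d * B ^ 2) := Real.sqrt_le_sqrt f9b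
        _ = 3 ^ d * B := by
            rw [show (9:ℝ) ^ d * B ^ 2 = (3 ^ d * B)^2 by rw [mul_pow, h93sq]]
            exact Real.sqrt_sq (by positivity)
    have sqrt_nonneg1 : 0 ≤ Real.sqrt (expec (fun x => (Pg γ₁ x)^4)) := Real.sqrt_nonneg _
    have f11 : expec (fun x => (Pg γ x) ^ 4)
        ≤ 9 ^ (d-1) * A ^ 2 + (6 * ((3 ^ (d-1) * A) * (3 ^ d * B)) + 9 ^ d * B ^ 2) := by
      rw [f8]
      gcongr
      calc expec (fun x => (Pg γ₁ x)^2 * (Pg γ₂ x)^2)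
          ≤ Real.sqrt (expec (fun x => (Pg γ₁ x)^4)) * Real.sqrt (expec (fun x => (Pg γ₂ x)^4)) := f10
        _ ≤ (3 ^ (d-1) * A) * (3 ^ d * B) := by
            apply mul_le_mul s1 s2 (Real.sqrt_nonneg _) (by positivity)
    rw [f5]
    refine f11.trans ?_
    clear_value A B
    clear f11 f10 s1 s2 f9a f9b f8 f7 f6a f6b f5 f4 e2 e1 f3 f2 f1b f1a hs IH hγ₁ hγ₂ hB sqrt_nonneg1
    rcases Nat.eq_zero_or_pos d with hd | hd
    · have hAzero : A = 0 := by
        rw [hA]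
        apply Finset.sum_eq_zero
        intro T _
        rw [f2' hd T]
        ring
      clear hA f2' γ₁ γ₂ γ
      subst hd
      rw [hAzero]
      norm_num
    · obtain ⟨d', rfl⟩ : ∃ d', d = d' + 1 := ⟨d - 1, (Nat.succ_pred_eq_of_pos hd).symm⟩
      clear hA f2' γ₁ γ₂ γ
      have hd1 : d' + 1 - 1 = d' := rfl
      rw [hd1]
      have e9 : (9:ℝ) ^ (d' + 1) = 9 * 9 ^ d' := by ring
      have e3 : (3:ℝ) ^ (d' + 1) = 3 * 3 ^ d' := by ring
      rw [e9, e3, h93 d']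
      nlinarith [sq_nonneg ((3:ℝ) ^ d' * A)]

end TruncAux



end Aux

/-- Truncation estimate: ‖f^{≤d}‖₂² ≤ 3^{d/2} ‖f‖₂ ‖f‖_{4/3}. -/
theorem truncation_estimate {n : ℕ} (f : (Fin n → Bool) → ℝ) (d : ℕ) :
    pnorm 2 (fun x => ∑ S ∈ Finset.univ.filter (fun S : Finset (Fin n) => S.card ≤ d),
        fcoef f S * chi S x) ^ 2 ≤
      (3 : ℝ) ^ ((d : ℝ) / 2) * pnorm 2 f * pnorm (4 / 3) f := by
  classical
  set γ : Finset (Fin n) → ℝ := fun S => if S.card ≤ d then fcoef f S else 0 with hγ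
  have hg : (fun x => ∑ S ∈ Finset.univ.filter (fun S : Finset (Fin n) => S.card ≤ d),
      fcoef f S * chi S x) = TruncAux.Pg γ := by
    funext x
    unfold TruncAux.Pg
    rw [Finset.sum_filter]
    apply Finset.sum_congr rfl
    intro S _
    by_cases h : S.card ≤ d <;> simp [hγ, h]
  set A := ∑ S : Finset (Fin n), γ S ^ 2 with hAdef
  have hA0 : 0 ≤ A := Finset.sum_nonneg fun S _ => sq_nonneg _
  -- Parseval for the truncation
  have hGsq : expec (fun x => TruncAux.Pg γ x ^ 2) = A := by
    have h := TruncAux.expec_Pg_mul_Pg γ γ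
    simp only [← pow_two] at h
    exact h
  -- inner product with f
  have hGF : expec (fun x => TruncAux.Pg γ x * f x) = A := by
    rw [TruncAux.expec_Pg_mul]
    apply Finset.sum_congr rfl
    intro S _
    by_cases h : S.card ≤ d <;> simp [hγ, h] <;> ring
  -- pnorm facts
  have habs2 : ∀ g : (Fin n → Bool) → ℝ, (fun x => |g x| ^ (2:ℝ)) = fun x => g x ^ 2 := by
    intro g
    funext x
    rw [show (2:ℝ) = ((2:ℕ):ℝ) by norm_num, Real.rpow_natCast, sq_abs]
  have hpnorm2 : ∀ g : (Fin n → Bool) → ℝ,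
      pnorm 2 g = Real.sqrt (expec fun x => g x ^ 2) := by
    intro g
    unfold pnorm
    rw [habs2 g, Real.sqrt_eq_rpow]
  have hpnorm43nonneg : 0 ≤ pnorm (4/3) f := by
    unfold pnorm
    apply Real.rpow_nonneg
    apply TruncAux.expec_nonneg
    intro x
    positivity
  -- Cauchy-Schwarz: √A ≤ ‖f‖₂
  have hsqrtA : Real.sqrt A ≤ pnorm 2 f := by
    rw [hpnorm2]
    rcases eq_or_lt_of_le hA0 with h0 | h0
    · rw [← h0]
      simp [Real.sqrt_nonneg]
    · have hCS : A ≤ Real.sqrt A * Real.sqrt (expec fun x => f x ^ 2) := by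
        calc A = expec (fun x => TruncAux.Pg γ x * f x) := hGF.symm
          _ ≤ Real.sqrt (expec fun x => TruncAux.Pg γ x ^ 2)
              * Real.sqrt (expec fun x => f x ^ 2) := TruncAux.expec_mul_le _ _
          _ = Real.sqrt A * Real.sqrt (expec fun x => f x ^ 2) := by rw [hGsq]
      have hsp : 0 < Real.sqrt A := Real.sqrt_pos.mpr h0
      have : Real.sqrt A * Real.sqrt A ≤ Real.sqrt A * Real.sqrt (expec fun x => f x ^ 2) := by
        rwa [Real.mul_self_sqrt hA0]
      exact le_of_mul_le_mul_left this hsp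
  -- Hölder
  have hconj : Real.HolderConjugate 4 (4/3) := Real.holderConjugate_iff.mpr ⟨by norm_num, by norm_num⟩
  have hN : (0:ℝ) < 2 ^ n := by positivity
  have hHold : expec (fun x => TruncAux.Pg γ x * f x)
      ≤ (expec fun x => |TruncAux.Pg γ x| ^ (4:ℝ)) ^ ((1:ℝ)/4) * pnorm (4/3) f := by
    have hH := Real.inner_le_Lp_mul_Lq (Finset.univ) (fun x => TruncAux.Pg γ x) f hconj
    have h1 : (0:ℝ) ≤ ∑ x : Fin n → Bool, |TruncAux.Pg γ x| ^ (4:ℝ) :=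
      Finset.sum_nonneg fun x _ => by positivity
    have h2 : (0:ℝ) ≤ ∑ x : Fin n → Bool, |f x| ^ ((4:ℝ)/3) :=
      Finset.sum_nonneg fun x _ => by positivity
    have hrw : (expec fun x => |TruncAux.Pg γ x| ^ (4:ℝ)) ^ ((1:ℝ)/4) * pnorm (4/3) f
        = ((∑ x : Fin n → Bool, |TruncAux.Pg γ x| ^ (4:ℝ)) ^ ((1:ℝ)/4)
           * (∑ x : Fin n → Bool, |f x| ^ ((4:ℝ)/3)) ^ ((1:ℝ)/(4/3))) / 2 ^ n := by
      unfold pnorm expec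
      rw [Real.div_rpow h1 hN.le, Real.div_rpow h2 hN.le, div_mul_div_comm]
      congr 1
      rw [← Real.rpow_add hN, show (1:ℝ)/4 + 1/(4/3) = 1 by norm_num, Real.rpow_one]
    rw [hrw]
    show (∑ x : Fin n → Bool, TruncAux.Pg γ x * f x) / 2 ^ n ≤ _
    gcongr
  -- Bonami
  have habs4 : (fun x => |TruncAux.Pg γ x| ^ (4:ℝ)) = fun x => TruncAux.Pg γ x ^ 4 := by
    funext x
    rw [show (4:ℝ) = ((4:ℕ):ℝ) by norm_num, Real.rpow_natCast, pow_abs,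
      abs_of_nonneg (by positivity)]
  have hsupp : ∀ S : Finset (Fin n), γ S ≠ 0 → S.card ≤ d ∧ S ⊆ Finset.univ := by
    intro S h
    refine ⟨?_, Finset.subset_univ S⟩
    by_contra hc
    exact h (if_neg hc)
  have hBon : expec (fun x => TruncAux.Pg γ x ^ 4) ≤ 9 ^ d * A ^ 2 :=
    TruncAux.bonami Finset.univ d γ hsupp
  have hBon4 : (expec fun x => |TruncAux.Pg γ x| ^ (4:ℝ)) ^ ((1:ℝ)/4)
      ≤ (3:ℝ) ^ ((d:ℝ)/2) * Real.sqrt A := by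
    rw [habs4]
    have hnn : 0 ≤ expec (fun x => TruncAux.Pg γ x ^ 4) :=
      TruncAux.expec_nonneg fun x => by positivity
    calc (expec fun x => TruncAux.Pg γ x ^ 4) ^ ((1:ℝ)/4)
        ≤ ((9:ℝ) ^ d * A ^ 2) ^ ((1:ℝ)/4) := Real.rpow_le_rpow hnn hBon (by norm_num)
      _ = (3:ℝ) ^ ((d:ℝ)/2) * Real.sqrt A := by
          rw [show (9:ℝ) ^ d = 3 ^ (2*d) by rw [pow_mul]; norm_num]
          rw [Real.mul_rpow (by positivity) (sq_nonneg A)]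
          congr 1
          · rw [← Real.rpow_natCast 3 (2*d), ← Real.rpow_mul (by norm_num : (0:ℝ) ≤ 3)]
            congr 1
            push_cast
            ring
          · rw [← Real.rpow_natCast A 2, ← Real.rpow_mul hA0, Real.sqrt_eq_rpow]
            norm_num
  -- put it together
  rw [hg, hpnorm2, hGsq, Real.sq_sqrt hA0]
  calc A = expec (fun x => TruncAux.Pg γ x * f x) := hGF.symm
    _ ≤ (expec fun x => |TruncAux.Pg γ x| ^ (4:ℝ)) ^ ((1:ℝ)/4) * pnorm (4/3) f :=
        hHold
    _ ≤ ((3:ℝ) ^ ((d:ℝ)/2) * Real.sqrt A) * pnorm (4/3) f := by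
        apply mul_le_mul_of_nonneg_right hBon4 hpnorm43nonneg
    _ ≤ ((3:ℝ) ^ ((d:ℝ)/2) * pnorm 2 f) * pnorm (4/3) f := by
        apply mul_le_mul_of_nonneg_right ?_ hpnorm43nonneg
        apply mul_le_mul_of_nonneg_left hsqrtA (by positivity)
    _ = (3:ℝ) ^ ((d:ℝ)/2) * pnorm 2 f * pnorm (4/3) f := rfl
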